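/- Let E be a finite-dimensional real inner product space, ν a norm on E, x ∈ E, c ∈ ℝ, and let a := sup{⟨x,u⟩ : u ∈ E, ν(u) ≤ 1} be the dual norm of x. If 0 ≤ η < a², then the set {(⟨x,q⟩ + c)² − η·ν(q)² : q ∈ E} is not bounded above. -/

import Mathlib

/-- Lemma 6.3(i) (unbounded case, `m = 2`): for a norm `ν` on a finite-dimensional real
inner product space, with `a = ν*(x)` the dual norm of `x`, if `0 ≤ η < a²` then the
objective `q ↦ (⟨x,q⟩ + c)² − η·ν(q)²` is not bounded above. -/
theorem perturbation_problem_unbounded {E : Type*} [NormedAddCommGroup E]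
    [InnerProductSpace ℝ E] [FiniteDimensional ℝ E]
    (ν : E → ℝ)
    (hν_add : ∀ u v, ν (u + v) ≤ ν u + ν v)
    (hν_smul : ∀ (a : ℝ) (u : E), ν (a • u) = |a| * ν u)
    (hν_eq : ∀ u, ν u = 0 ↔ u = 0)
    (x : E) (c η a : ℝ)
    (ha : a = sSup ((fun u => (inner ℝ x u : ℝ)) '' {u | ν u ≤ 1}))
    (hη0 : 0 ≤ η) (hη : η < a ^ 2) :
    ¬ BddAbove (Set.range fun q : E => ((inner ℝ x q : ℝ) + c) ^ 2 - η * ν q ^ 2) := by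
  intro hbdd
  have hν0 : ν 0 = 0 := by
    have h := hν_smul 0 0; simpa using h
  have hνnn : ∀ u, 0 ≤ ν u := by
    intro u
    have h := hν_add u (-u)
    have h2 : ν (-u) = ν u := by
      have h3 := hν_smul (-1) u; simpa using h3
    have h4 : ν (u + -u) = 0 := by simpa using hν0
    linarith [h4 ▸ h, h2 ▸ h]
  set S := (fun u => (inner ℝ x u : ℝ)) '' {u | ν u ≤ 1} with hS
  have hmem0 : (0:ℝ) ∈ S := ⟨0, by simp [hν0], by simp⟩
  by_cases hSb : BddAbove S
  · have ha0 : 0 ≤ a := ha ▸ le_csSup hSb hmem0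
    have hsq : Real.sqrt η < a := by
      have h := Real.sqrt_lt_sqrt hη0 hη
      rwa [Real.sqrt_sq ha0] at h
    obtain ⟨y, hyS, hy⟩ := exists_lt_of_lt_csSup ⟨0, hmem0⟩ (ha ▸ hsq)
    obtain ⟨u, hu, rfl⟩ := hyS
    set s := (inner ℝ x u : ℝ) with hs
    have hs0 : 0 < s := lt_of_le_of_lt (Real.sqrt_nonneg η) hy
    have hsε : η < s ^ 2 := by nlinarith [Real.sq_sqrt hη0, Real.sqrt_nonneg η]
    obtain ⟨M, hM⟩ := hbdd
    set ε := s ^ 2 - η with hε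
    have hε0 : 0 < ε := by linarith
    set A := Real.sqrt (max M 0 / ε) with hA
    have hA0 : 0 ≤ A := Real.sqrt_nonneg _
    set T := A + 1 with hT
    have hT2 : M < T ^ 2 * ε := by
      have h1 : A ^ 2 = max M 0 / ε := Real.sq_sqrt (by positivity)
      have h2 : max M 0 / ε * ε = max M 0 := div_mul_cancel₀ _ (ne_of_gt hε0)
      have h3 : A ^ 2 * ε = max M 0 := by rw [h1]; exact h2
      have h4 : T ^ 2 * ε = A ^ 2 * ε + (2 * A + 1) * ε := by rw [hT]; ring
      have h5 : ε ≤ (2 * A + 1) * ε := by nlinarith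
      have := le_max_left M 0
      linarith
    set t := if 0 ≤ c then T else -T with ht
    have hTpos : 0 < T := by linarith
    have hts : 0 ≤ t * s * c := by
      rcases le_or_gt 0 c with h | h
      · simp only [ht, if_pos h]; positivity
      · simp only [ht, if_neg (not_le.mpr h)]
        have : -T * s * c = T * s * (-c) := by ring
        rw [this]; have : 0 ≤ -c := by linarith
        positivity
    have ht2 : t ^ 2 = T ^ 2 := by
      rcases le_or_gt 0 c with h | h
      · rw [ht, if_pos h]
      · rw [ht, if_neg (not_le.mpr h)]; ring
    have hval : ((inner ℝ x (t • u) : ℝ) + c) ^ 2 - η * ν (t • u) ^ 2 ≤ M :=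
      hM ⟨t • u, rfl⟩
    have hinner : (inner ℝ x (t • u) : ℝ) = t * s := real_inner_smul_right x u t
    have hνt : ν (t • u) = |t| * ν u := hν_smul t u
    have hνu1 : ν u ≤ 1 := hu
    have hν2 : ν (t • u) ^ 2 ≤ t ^ 2 := by
      rw [hνt]
      have h1 := hνnn u
      have h2 : (|t| * ν u) ^ 2 = t ^ 2 * ν u ^ 2 := by rw [mul_pow, sq_abs]
      have h3 : ν u ^ 2 ≤ 1 := by nlinarith
      nlinarith [mul_le_mul_of_nonneg_left h3 (sq_nonneg t)]
    rw [hinner] at hval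
    have hηle : η * ν (t • u) ^ 2 ≤ η * t ^ 2 := mul_le_mul_of_nonneg_left hν2 hη0
    have hexp : (t * s + c) ^ 2 = t ^ 2 * s ^ 2 + 2 * (t * s * c) + c ^ 2 := by ring
    have hkey : T ^ 2 * ε ≤ (t * s + c) ^ 2 - η * ν (t • u) ^ 2 := by
      have heq : T ^ 2 * ε = t ^ 2 * s ^ 2 - η * t ^ 2 := by rw [← ht2, hε]; ring
      linarith [sq_nonneg c]
    linarith
  · have h0 : a = 0 := by rw [ha]; exact Real.sSup_of_not_bddAbove hSb
    rw [h0] at hη; nlinarith
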